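/- In the field ℚ(w,T) of rational functions in two variables, for any even positive integer m and any d, the identity holds: (w^{2} (w^{2}+1)) · (w^{-m} T)/(1 - w^{-m} T) + (w^{4} - 1) · (w^{-m} T^{2} + Σ_{j=1}^{(m/2)-1} w^{-2j} T)/((1 - T)(1 - w^{-m} T)) = (w^{2}+1) T/(1 - T). -/

import Mathlib

lemma X_ne_C' {K : Type*} [Field K] (p : K) : (RatFunc.X : RatFunc K) ≠ RatFunc.C p := by
  rw [← RatFunc.algebraMap_X, ← RatFunc.algebraMap_C, Ne, (RatFunc.algebraMap_injective K).eq_iff]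
  exact Polynomial.X_ne_C p

lemma X_pow_ne_one' {K : Type*} [Field K] {n : ℕ} (hn : 0 < n) :
    (RatFunc.X : RatFunc K) ^ n ≠ 1 := by
  rw [← RatFunc.algebraMap_X, ← map_pow, ← map_one (algebraMap (Polynomial K) (RatFunc K)),
    Ne, (RatFunc.algebraMap_injective K).eq_iff]
  intro h
  have := congrArg Polynomial.natDegree h
  simp [Polynomial.natDegree_X_pow] at this
  omega

theorem stmt_2 (m : ℕ) (hm : 0 < m) (hme : Even m) (d : ℤ) :
    let T : RatFunc (RatFunc ℚ) := RatFunc.X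
    let w : RatFunc (RatFunc ℚ) := RatFunc.C RatFunc.X
    (w ^ 2 * (w ^ 2 + 1)) * (w ^ (-(m : ℤ)) * T) / (1 - w ^ (-(m : ℤ)) * T)
      + (w ^ 4 - 1) *
          (w ^ (-(m : ℤ)) * T ^ 2
            + (∑ j ∈ Finset.Icc 1 (m / 2 - 1), w ^ (-(2 * (j : ℤ)))) * T)
          / ((1 - T) * (1 - w ^ (-(m : ℤ)) * T))
      = (w ^ 2 + 1) * T / (1 - T) := by
  intro T w
  have hTdef : T = RatFunc.X := rfl
  have hwdef : w = RatFunc.C (RatFunc.X (K := ℚ)) := rfl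
  obtain ⟨k, hk⟩ := hme
  have hkm : m = 2 * k := by omega
  have hk1 : 1 ≤ k := by omega
  have hw : w ≠ 0 := by
    rw [hwdef]
    intro h
    exact RatFunc.X_ne_zero (K := ℚ) (RatFunc.C.injective (by rw [map_zero]; exact h))
  have hw2 : w ^ 2 ≠ 0 := pow_ne_zero _ hw
  have hwm : w ^ m ≠ 0 := pow_ne_zero _ hw
  have hw21 : w ^ 2 ≠ 1 := by
    rw [hwdef]
    intro h
    apply X_pow_ne_one' (K := ℚ) (n := 2) (by norm_num)
    apply RatFunc.C.injective
    rw [map_pow, map_one]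
    exact h
  have hT1 : 1 - T ≠ 0 := by
    rw [sub_ne_zero]
    intro h
    apply X_ne_C' (K := RatFunc ℚ) 1
    rw [map_one, ← hTdef]
    exact h.symm
  have hB : w ^ m - T ≠ 0 := by
    rw [sub_ne_zero]
    intro h
    apply X_ne_C' (K := RatFunc ℚ) (RatFunc.X ^ m)
    rw [map_pow, ← hTdef, ← hwdef]
    exact h.symm
  have hwm' : w ^ m * (w ^ m)⁻¹ = 1 := mul_inv_cancel₀ hwm
  have hw2' : w ^ 2 * (w ^ 2)⁻¹ = 1 := mul_inv_cancel₀ hw2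
  have hA : 1 - (w ^ m)⁻¹ * T ≠ 0 := by
    intro h
    apply hB
    have h2 := congrArg (fun x => w ^ m * x) h
    simp only [mul_sub, mul_one, mul_zero, ← mul_assoc, hwm', one_mul] at h2
    exact h2
  have hzm : w ^ (-(m : ℤ)) = (w ^ m)⁻¹ := by
    rw [zpow_neg, zpow_natCast]
  have hvk : ((w ^ 2)⁻¹) ^ k = (w ^ m)⁻¹ := by
    rw [hkm, pow_mul]
    exact inv_pow _ _
  set S : RatFunc (RatFunc ℚ) := ∑ j ∈ Finset.Icc 1 (m / 2 - 1), w ^ (-(2 * (j : ℤ))) with hSdef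
  have hrw : ∀ j : ℕ, w ^ (-(2 * (j : ℤ))) = ((w ^ 2)⁻¹) ^ j := by
    intro j
    have h2 : (2 * (j : ℤ)) = ((2 * j : ℕ) : ℤ) := by push_cast; ring
    rw [h2, zpow_neg, zpow_natCast, pow_mul, inv_pow]
  have hIcc : Finset.Icc 1 (m / 2 - 1) = Finset.Ico 1 k := by
    rw [← Finset.Ico_add_one_right_eq_Icc]
    congr 1
    omega
  have h1 : S * ((w ^ 2)⁻¹ - 1) = (w ^ m)⁻¹ - (w ^ 2)⁻¹ := by
    rw [hSdef, Finset.sum_congr rfl fun j _ => hrw j, hIcc, geom_sum_Ico_mul _ hk1, hvk, pow_one]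
  have hS : (w ^ 4 - 1) * S = (w ^ 2 + 1) * (1 - w ^ 2 * (w ^ m)⁻¹) := by
    linear_combination (-(w ^ 2) * (w ^ 2 + 1)) * h1 + (w ^ 2 + 1) * (S + 1) * hw2'
  have hS' : (w ^ 4 - 1) * S * w ^ m = (w ^ 2 + 1) * (w ^ m - w ^ 2) := by
    linear_combination (w ^ m) * hS - ((w ^ 2 + 1) * w ^ 2) * hwm'
  rw [hzm]
  field_simp
  linear_combination T * hS'
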